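/- Let λ > 0 and h ∈ E_λ. Define f̃_h(x) = ((x−1)!/λ^x)·Σ_{i=x}^∞ (λ^i/i!)·h(i) for x ∈ ℕ_*. Then f̃_h ∈ E_λ, i.e., Σ_{a ≥ 1} (λ^a/a!)·|P(a)·f̃_h(a)| < ∞ for every polynomial P. -/

import Mathlib

/-- `h ∈ E_λ` : for every polynomial `P`, `Σ_{i ≥ 1} (λ^i/i!)·|h(i)·P(i)| < ∞`
(the sum over `i ≥ 1` is written with the shifted index `i = j + 1`). -/
def memE (lam : ℝ) (h : ℕ → ℝ) : Prop :=
  ∀ P : Polynomial ℝ,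
    Summable fun j : ℕ =>
      lam ^ (j + 1) / ((j + 1).factorial : ℝ) * |h (j + 1) * P.eval ((j : ℝ) + 1)|

/-- `f̃_h(x) = ((x−1)!/λ^x)·Σ_{i=x}^∞ (λ^i/i!)·h(i)` (shifted index `i = x + j`). -/
noncomputable def ftilde (lam : ℝ) (h : ℕ → ℝ) (x : ℕ) : ℝ :=
  ((x - 1).factorial : ℝ) / lam ^ x * ∑' j : ℕ, lam ^ (x + j) * h (x + j) / ((x + j).factorial : ℝ)

/-- absolute summand -/
noncomputable def tt (lam : ℝ) (h : ℕ → ℝ) (i : ℕ) : ℝ :=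
  lam ^ i * |h i| / (i.factorial : ℝ)

lemma tt_nonneg (lam : ℝ) (hlam : 0 < lam) (h : ℕ → ℝ) (i : ℕ) : 0 ≤ tt lam h i := by
  have := hlam.le
  unfold tt
  positivity

lemma summable_tt (lam : ℝ) (h : ℕ → ℝ) (hh : memE lam h) : Summable (tt lam h) := by
  have h1 := hh 1
  simp only [Polynomial.eval_one, mul_one] at h1
  have h2 : Summable fun j : ℕ => tt lam h (j + 1) := by
    refine h1.congr fun j => ?_
    unfold tt
    ring
  exact (summable_nat_add_iff 1).mp h2

lemma summable_tt_shift (lam : ℝ) (h : ℕ → ℝ) (hh : memE lam h) (x : ℕ) :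
    Summable fun j : ℕ => tt lam h (x + j) := by
  have := (summable_nat_add_iff x).mpr (summable_tt lam h hh)
  exact this.congr fun j => by rw [Nat.add_comm]

lemma abs_ftilde_le (lam : ℝ) (hlam : 0 < lam) (h : ℕ → ℝ) (hh : memE lam h) (x : ℕ) :
    |ftilde lam h x| ≤ ((x - 1).factorial : ℝ) / lam ^ x * ∑' j : ℕ, tt lam h (x + j) := by
  unfold ftilde
  rw [abs_mul]
  have hc : 0 ≤ ((x - 1).factorial : ℝ) / lam ^ x := by positivity
  rw [abs_of_nonneg hc]
  refine mul_le_mul_of_nonneg_left ?_ hc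
  have heq : ∀ j : ℕ, |lam ^ (x + j) * h (x + j) / ((x + j).factorial : ℝ)| = tt lam h (x + j) := by
    intro j
    rw [abs_div, abs_mul, abs_of_nonneg (pow_nonneg hlam.le _),
      abs_of_nonneg (by positivity : (0:ℝ) ≤ ((x + j).factorial : ℝ))]
    rfl
  have habs : Summable fun j : ℕ =>
      |lam ^ (x + j) * h (x + j) / ((x + j).factorial : ℝ)| :=
    (summable_tt_shift lam h hh x).congr fun j => (heq j).symm
  calc |∑' j : ℕ, lam ^ (x + j) * h (x + j) / ((x + j).factorial : ℝ)|
      ≤ ∑' j : ℕ, |lam ^ (x + j) * h (x + j) / ((x + j).factorial : ℝ)| := by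
        have hn : Summable fun j : ℕ =>
            ‖lam ^ (x + j) * h (x + j) / ((x + j).factorial : ℝ)‖ := by
          simp only [Real.norm_eq_abs]; exact habs
        have := norm_tsum_le_tsum_norm hn
        simp only [Real.norm_eq_abs] at this
        exact this
    _ = ∑' j : ℕ, tt lam h (x + j) := tsum_congr fun j => heq j

/-- polynomial bound: `|P(x)| ≤ C (1+x)^d` for `x ≥ 0`. -/
lemma poly_bound (P : Polynomial ℝ) (x : ℝ) (hx : 0 ≤ x) :
    |P.eval x| ≤ (∑ n ∈ Finset.range (P.natDegree + 1), |P.coeff n|) * (1 + x) ^ P.natDegree := by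
  rw [Polynomial.eval_eq_sum_range, Finset.sum_mul]
  refine (Finset.abs_sum_le_sum_abs _ _).trans (Finset.sum_le_sum fun n hn => ?_)
  rw [abs_mul, abs_pow, abs_of_nonneg hx]
  refine mul_le_mul_of_nonneg_left ?_ (abs_nonneg _)
  calc x ^ n ≤ (1 + x) ^ n := pow_le_pow_left₀ hx (by linarith) n
    _ ≤ (1 + x) ^ P.natDegree :=
        pow_le_pow_right₀ (by linarith) (Nat.lt_succ_iff.mp (Finset.mem_range.mp hn))

open scoped ENNReal in
/-- If `h ∈ E_λ` then `f̃_h ∈ E_λ`. -/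
theorem memE_ftilde (lam : ℝ) (hlam : 0 < lam) (h : ℕ → ℝ) (hh : memE lam h) :
    memE lam (ftilde lam h) := by
  intro P
  classical
  set d := P.natDegree with hd
  set C : ℝ := ∑ n ∈ Finset.range (d + 1), |P.coeff n| with hCdef
  have hC : 0 ≤ C := Finset.sum_nonneg fun _ _ => abs_nonneg _
  set u : ℕ → ℝ := fun k =>
    lam ^ (k + 1) / ((k + 1).factorial : ℝ) * |ftilde lam h (k + 1) * P.eval ((k : ℝ) + 1)|
    with hu
  have hu_nonneg : ∀ k, 0 ≤ u k := fun k => by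
    have := hlam.le
    simp only [hu]
    positivity
  -- pointwise bound
  have hbound : ∀ k : ℕ, u k ≤
      |P.eval ((k : ℝ) + 1)| / ((k : ℝ) + 1) * ∑' j : ℕ, tt lam h (k + 1 + j) := by
    intro k
    have h1 : |ftilde lam h (k + 1)| ≤
        (k.factorial : ℝ) / lam ^ (k + 1) * ∑' j : ℕ, tt lam h (k + 1 + j) := by
      simpa using abs_ftilde_le lam hlam h hh (k + 1)
    have hA : (0:ℝ) ≤ lam ^ (k + 1) / ((k + 1).factorial : ℝ) := by positivity
    have hfac : ((k + 1).factorial : ℝ) = ((k : ℝ) + 1) * (k.factorial : ℝ) := by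
      rw [Nat.factorial_succ]; push_cast; ring
    calc u k = lam ^ (k + 1) / ((k + 1).factorial : ℝ) *
          (|ftilde lam h (k + 1)| * |P.eval ((k : ℝ) + 1)|) := by
          simp only [hu]; rw [abs_mul]
      _ ≤ lam ^ (k + 1) / ((k + 1).factorial : ℝ) *
          (((k.factorial : ℝ) / lam ^ (k + 1) * ∑' j : ℕ, tt lam h (k + 1 + j)) *
            |P.eval ((k : ℝ) + 1)|) :=
          mul_le_mul_of_nonneg_left (mul_le_mul_of_nonneg_right h1 (abs_nonneg _)) hA
      _ = |P.eval ((k : ℝ) + 1)| / ((k : ℝ) + 1) * ∑' j : ℕ, tt lam h (k + 1 + j) := by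
          have hlam' : lam ^ (k + 1) ≠ 0 := by positivity
          have hk1 : ((k : ℝ) + 1) ≠ 0 := by positivity
          have hkf : (k.factorial : ℝ) ≠ 0 := by positivity
          rw [hfac]
          field_simp
  -- ENNReal machinery
  set T : ℕ → ℝ≥0∞ := fun i => ENNReal.ofReal (tt lam h i) with hT
  set c : ℕ → ℝ≥0∞ := fun k => ENNReal.ofReal (|P.eval ((k : ℝ) + 1)| / ((k : ℝ) + 1)) with hc
  have hSk : ∀ k : ℕ, ENNReal.ofReal (∑' j : ℕ, tt lam h (k + 1 + j)) = ∑' j : ℕ, T (k + 1 + j) :=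
    fun k => ENNReal.ofReal_tsum_of_nonneg (fun j => tt_nonneg lam hlam h _)
      (summable_tt_shift lam h hh (k + 1))
  -- the comparison polynomial
  set Q : Polynomial ℝ := C • (Polynomial.X * (Polynomial.X + 1) ^ d) with hQ
  have hQeval : ∀ x : ℝ, Q.eval x = C * x * (x + 1) ^ d := by
    intro x; simp [hQ]; ring
  have hsumQ : Summable fun i : ℕ => C * ((i : ℝ) + 1) * ((i : ℝ) + 2) ^ d * tt lam h (i + 1) := by
    refine (hh Q).congr fun j => ?_
    have hQpos : (0:ℝ) ≤ Q.eval ((j : ℝ) + 1) := by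
      rw [hQeval]; positivity
    rw [abs_mul, abs_of_nonneg hQpos, hQeval]
    simp only [tt]
    push_cast
    ring_nf
  have hgnonneg : ∀ i : ℕ, 0 ≤ C * ((i : ℝ) + 1) * ((i : ℝ) + 2) ^ d * tt lam h (i + 1) := by
    intro i
    have := tt_nonneg lam hlam h (i + 1)
    positivity
  -- the double-sum swap, in ℝ≥0∞
  set F : ℕ × ℕ → ℝ≥0∞ := fun q => if q.1 ≤ q.2 then c q.1 * T (q.2 + 1) else 0 with hF
  have hφinj : Function.Injective (fun p : ℕ × ℕ => (p.1, p.1 + p.2)) := by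
    intro p q hpq
    simp only [Prod.mk.injEq] at hpq
    obtain ⟨h1, h2⟩ := hpq
    exact Prod.ext h1 (by omega)
  have hFsupp : Function.support F ⊆ Set.range (fun p : ℕ × ℕ => (p.1, p.1 + p.2)) := by
    intro q hq
    by_cases hle : q.1 ≤ q.2
    · exact ⟨(q.1, q.2 - q.1), by simp [Prod.ext_iff]; omega⟩
    · exact absurd (by simp [hF, hle]) hq
  have main : ∑' k : ℕ, ENNReal.ofReal (u k) ≠ ⊤ := by
    have step1 : ∑' k : ℕ, ENNReal.ofReal (u k) ≤ ∑' (k : ℕ) (j : ℕ), c k * T (k + 1 + j) := by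
      refine ENNReal.tsum_le_tsum (fun k => ?_)
      calc ENNReal.ofReal (u k)
          ≤ ENNReal.ofReal (|P.eval ((k : ℝ) + 1)| / ((k : ℝ) + 1) *
              ∑' j : ℕ, tt lam h (k + 1 + j)) := ENNReal.ofReal_le_ofReal (hbound k)
        _ = c k * ∑' j : ℕ, T (k + 1 + j) := by
            rw [ENNReal.ofReal_mul (by positivity), hSk k]
        _ = ∑' j : ℕ, c k * T (k + 1 + j) := ENNReal.tsum_mul_left.symm
    have step2 : ∑' (k : ℕ) (j : ℕ), c k * T (k + 1 + j) = ∑' q : ℕ × ℕ, F q := by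
      rw [← ENNReal.tsum_prod (f := fun k j => c k * T (k + 1 + j))]
      rw [← hφinj.tsum_eq hFsupp]
      refine tsum_congr fun p => ?_
      simp only [hF, if_pos (Nat.le_add_right p.1 p.2)]
      congr 2
      omega
    have step3 : ∑' q : ℕ × ℕ, F q =
        ∑' i : ℕ, (∑ a ∈ Finset.range (i + 1), c a) * T (i + 1) := by
      rw [ENNReal.tsum_prod']
      rw [ENNReal.tsum_comm]
      refine tsum_congr fun i => ?_
      have : ∑' a : ℕ, F (a, i) = ∑ a ∈ Finset.range (i + 1), F (a, i) := by
        refine tsum_eq_sum fun a ha => ?_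
        have hna : ¬ a ≤ i := fun hle => ha (Finset.mem_range.mpr (by omega))
        simp [hF, hna]
      rw [this, Finset.sum_mul]
      refine Finset.sum_congr rfl fun a ha => ?_
      simp [hF, Nat.lt_succ_iff.mp (Finset.mem_range.mp ha)]
    have step4 : ∑' i : ℕ, (∑ a ∈ Finset.range (i + 1), c a) * T (i + 1) ≤
        ∑' i : ℕ, ENNReal.ofReal (C * ((i : ℝ) + 1) * ((i : ℝ) + 2) ^ d * tt lam h (i + 1)) := by
      refine ENNReal.tsum_le_tsum (fun i => ?_)
      have hsum_c : ∑ a ∈ Finset.range (i + 1), c a =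
          ENNReal.ofReal (∑ a ∈ Finset.range (i + 1), |P.eval ((a : ℝ) + 1)| / ((a : ℝ) + 1)) :=
        (ENNReal.ofReal_sum_of_nonneg fun a _ => by positivity).symm
      have hreal : ∑ a ∈ Finset.range (i + 1), |P.eval ((a : ℝ) + 1)| / ((a : ℝ) + 1) ≤
          C * ((i : ℝ) + 1) * ((i : ℝ) + 2) ^ d := by
        have hterm : ∀ a ∈ Finset.range (i + 1),
            |P.eval ((a : ℝ) + 1)| / ((a : ℝ) + 1) ≤ C * ((i : ℝ) + 2) ^ d := by
          intro a ha
          have hai : (a : ℝ) ≤ (i : ℝ) := by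
            exact_mod_cast Nat.lt_succ_iff.mp (Finset.mem_range.mp ha)
          calc |P.eval ((a : ℝ) + 1)| / ((a : ℝ) + 1) ≤ |P.eval ((a : ℝ) + 1)| :=
                div_le_self (abs_nonneg _) (by have : (0:ℝ) ≤ (a:ℝ) := Nat.cast_nonneg a; linarith)
            _ ≤ C * (1 + ((a : ℝ) + 1)) ^ d := poly_bound P _ (by positivity)
            _ ≤ C * ((i : ℝ) + 2) ^ d := by
                refine mul_le_mul_of_nonneg_left ?_ hC
                exact pow_le_pow_left₀ (by positivity) (by linarith) d
        calc ∑ a ∈ Finset.range (i + 1), |P.eval ((a : ℝ) + 1)| / ((a : ℝ) + 1)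
            ≤ ∑ _a ∈ Finset.range (i + 1), C * ((i : ℝ) + 2) ^ d := Finset.sum_le_sum hterm
          _ = ((i : ℝ) + 1) * (C * ((i : ℝ) + 2) ^ d) := by
              rw [Finset.sum_const, Finset.card_range]; push_cast; ring
          _ = C * ((i : ℝ) + 1) * ((i : ℝ) + 2) ^ d := by ring
      calc (∑ a ∈ Finset.range (i + 1), c a) * T (i + 1)
          ≤ ENNReal.ofReal (C * ((i : ℝ) + 1) * ((i : ℝ) + 2) ^ d) * T (i + 1) := by
            refine mul_le_mul_left ?_ _
            rw [hsum_c]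
            exact ENNReal.ofReal_le_ofReal hreal
        _ = ENNReal.ofReal (C * ((i : ℝ) + 1) * ((i : ℝ) + 2) ^ d * tt lam h (i + 1)) :=
            (ENNReal.ofReal_mul (by positivity)).symm
    have step5 : ∑' i : ℕ,
        ENNReal.ofReal (C * ((i : ℝ) + 1) * ((i : ℝ) + 2) ^ d * tt lam h (i + 1)) ≠ ⊤ := by
      rw [← ENNReal.ofReal_tsum_of_nonneg hgnonneg hsumQ]
      exact ENNReal.ofReal_ne_top
    exact ne_top_of_le_ne_top step5 (step1.trans (le_of_eq (step2.trans step3)) |>.trans step4)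
  have := ENNReal.summable_toReal main
  refine this.congr fun k => ?_
  simp [ENNReal.toReal_ofReal (hu_nonneg k), hu]
  positivity
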